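/- Let 𝕁 be an H-subgraph (H connected) of an ordered graph, let U ⊊ V(𝕁) be a 𝕁-stable set, and let (G_i, U_i) be any member of Spine_𝕁(U) with nadir v = Nadir(G_i, U_i). Then U ∪ {v} is 𝕁-stable. -/

import Mathlib

open SimpleGraph

variable {V W : Type*}

/-- `J` is an `H`-subgraph of `G`: a subgraph of `G` isomorphic to `H`. -/
def IsHSub (G : SimpleGraph V) (H : SimpleGraph W) (J : G.Subgraph) : Prop :=
  ∃ f : W → V, Function.Injective f ∧ Set.range f = J.verts ∧
    ∀ a b : W, H.Adj a b ↔ J.Adj (f a) (f b)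

/-- `D` is a prefix of the induced ordered subgraph of `J` on the vertex set `A`. -/
def IsPrefixOf [LinearOrder V] {G : SimpleGraph V} (J : G.Subgraph) (A D : Set V) : Prop :=
  D.Nonempty ∧ D ⊆ A ∧
    (∀ u ∈ D, ∃ v ∈ A \ D, J.Adj u v) ∧
    (∀ u ∈ D, ∀ v ∈ A \ D, u < v) ∧
    (∀ v ∈ A, (∃ x ∈ J.verts \ A, J.Adj v x) → v ∈ D)

/-- `(A, D)` is a useful pair in the `H`-subgraph `J`: `A` induces an ordered subgraph
of `J`, `D` is a prefix of it, and `J[A ∖ D]` is connected. -/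
def IsUsefulPair [LinearOrder V] {G : SimpleGraph V} (J : G.Subgraph) (A D : Set V) : Prop :=
  A ⊆ J.verts ∧ IsPrefixOf J A D ∧ (J.induce (A \ D)).Connected

/-- The spine of `U` in `J`: all useful pairs `(A, D)` with `A ∩ U = D`. -/
def Spine [LinearOrder V] {G : SimpleGraph V} (J : G.Subgraph) (U : Set V) :
    Set (Set V × Set V) :=
  {P | IsUsefulPair J P.1 P.2 ∧ P.1 ∩ U = P.2}

/-- `U` is `J`-stable: every vertex of `J` outside `U` lies in `A ∖ D` for some
member `(A, D)` of the spine of `U`. -/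
def IsStable [LinearOrder V] {G : SimpleGraph V} (J : G.Subgraph) (U : Set V) : Prop :=
  ∀ w ∈ J.verts \ U, ∃ P ∈ Spine J U, w ∈ P.1 \ P.2

/-- Adding the nadir of a spine member to a `J`-stable proper subset keeps it `J`-stable. -/
theorem stmt10 [Fintype V] [LinearOrder V] (G : SimpleGraph V) (H : SimpleGraph W)
    (hH : H.Connected) (J : G.Subgraph) (hJ : IsHSub G H J) (U : Set V)
    (hU : U ⊆ J.verts) (hUne : U ≠ J.verts) (hstable : IsStable J U)
    (P : Set V × Set V) (hP : P ∈ Spine J U) (v : V)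
    (hv : v ∈ P.1 \ P.2 ∧ ∀ u ∈ P.1 \ P.2, v ≤ u) :
    IsStable J (U ∪ {v}) := by
  obtain ⟨⟨hPJ, hPpre, hPconn⟩, hPU⟩ := hP
  obtain ⟨hvS, hvmin⟩ := hv
  have hP2U : P.2 ⊆ U := by rw [← hPU]; exact Set.inter_subset_right
  have hvU : v ∉ U := fun h => hvS.2 (by rw [← hPU]; exact ⟨hvS.1, h⟩)
  intro w hw
  obtain ⟨hwJ, hwUv⟩ := hw
  have hwU : w ∉ U := fun h => hwUv (Or.inl h)
  have hwv : w ≠ v := fun h => hwUv (Or.inr h)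
  obtain ⟨P0, ⟨⟨hAJ, hpre, hconn⟩, hAU⟩, hwS0⟩ := hstable w ⟨hwJ, hwU⟩
  obtain ⟨hD0ne, hD0A, hD0adj, hD0lt, hbd0⟩ := hpre
  by_cases hvA : v ∈ P0.1
  · -- v belongs to P0; build a new useful pair from the component of w
    set S0 : Set V := P0.1 \ P0.2 with hS0def
    have hS0U : ∀ x ∈ S0, x ∉ U := fun x hx hxU => hx.2 (by rw [← hAU]; exact ⟨hx.1, hxU⟩)
    have hvS0 : v ∈ S0 := ⟨hvA, fun h => hvU (by rw [← hAU] at h; exact h.2)⟩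
    set QS0 : SimpleGraph V := (J.induce S0).spanningCoe with hQS0def
    have hQS0adj : ∀ {a b : V}, QS0.Adj a b → a ∈ S0 ∧ b ∈ S0 ∧ J.Adj a b :=
      fun h => h
    have hQS0adj' : ∀ {a b : V}, a ∈ S0 → b ∈ S0 → J.Adj a b → QS0.Adj a b :=
      fun ha hb h => ⟨ha, hb, h⟩
    have hreach : ∀ x ∈ S0, ∀ y ∈ S0, QS0.Reachable x y := by
      intro x hx y hy
      have := (hconn.coe.preconnected ⟨x, hx⟩ ⟨y, hy⟩).map
        (⟨Subtype.val, fun h => h⟩ : (J.induce S0).coe →g QS0)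
      exact this
    -- Step 1: S0 ⊆ P.1 \ P.2
    have key : ∀ x y : V, QS0.Walk x y → x ∈ P.1 \ P.2 → y ∈ P.1 \ P.2 := by
      intro x y p
      induction p with
      | nil => exact id
      | @cons a b c h p ih =>
        intro ha
        apply ih
        obtain ⟨haS, hbS, hab⟩ := hQS0adj h
        have hbU : b ∉ U := hS0U _ hbS
        have hbP2 : b ∉ P.2 := fun hb => hbU (hP2U hb)
        have hbP1 : b ∈ P.1 := by
          by_contra hb
          exact ha.2 (hPpre.2.2.2.2 _ ha.1 ⟨_, ⟨hAJ hbS.1, hb⟩, hab⟩)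
        exact ⟨hbP1, hbP2⟩
    have hS0P : ∀ x ∈ S0, x ∈ P.1 \ P.2 := by
      intro x hx
      obtain ⟨p⟩ := hreach v hvS0 x hx
      exact key v x p hvS
    -- the component of w in S0 \ {v}
    set S1 : Set V := S0 \ {v} with hS1def
    set QC : SimpleGraph V := (J.induce S1).spanningCoe with hQCdef
    have hQCadj : ∀ {a b : V}, QC.Adj a b → a ∈ S1 ∧ b ∈ S1 ∧ J.Adj a b :=
      fun h => h
    have hQCadj' : ∀ {a b : V}, a ∈ S1 → b ∈ S1 → J.Adj a b → QC.Adj a b :=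
      fun ha hb h => ⟨ha, hb, h⟩
    have hwS1 : w ∈ S1 := ⟨hwS0, hwv⟩
    set C : Set V := {x | QC.Reachable x w} with hCdef
    have hwC : w ∈ C := Reachable.refl w
    have hCsub : C ⊆ S1 := by
      intro x hx
      obtain ⟨p⟩ := hx
      cases p with
      | nil => exact hwS1
      | cons h _ => exact (hQCadj h).1
    have hclose : ∀ x ∈ C, ∀ y, J.Adj x y → y ∈ S1 → y ∈ C := by
      intro x hx y hxy hy
      exact Reachable.trans (Adj.reachable (hQCadj' hy (hCsub hx) hxy.symm)) hx
    -- v has a neighbour in C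
    have aux : ∀ x y (p : QS0.Walk x y), x ∈ C → y = v → ∃ c ∈ C, J.Adj v c := by
      intro x y p
      induction p with
      | nil => exact fun hx hxv => absurd (hxv ▸ rfl) (hCsub hx).2
      | @cons a b c h p ih =>
        intro hx hyv
        obtain ⟨haS, hbS, hab⟩ := hQS0adj h
        by_cases hbv : b = v
        · exact ⟨a, hx, by rw [← hbv]; exact hab.symm⟩
        · exact ih (hclose a hx b hab ⟨hbS, hbv⟩) hyv
    have hvadj : ∃ c ∈ C, J.Adj v c := by
      obtain ⟨p⟩ := hreach w hwS0 v hvS0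
      exact aux w v p hwC rfl
    -- the new pair
    set D' : Set V := {u | (u ∈ P0.2 ∨ u = v) ∧ ∃ c ∈ C, J.Adj u c} with hD'def
    set A' : Set V := C ∪ D' with hA'def
    have hvD' : v ∈ D' := ⟨Or.inr rfl, hvadj⟩
    have hCD' : ∀ x ∈ C, x ∉ D' := by
      intro x hx hxd
      rcases hxd.1 with h | h
      · exact (hCsub hx).1.2 h
      · exact (hCsub hx).2 h
    have hAmD : A' \ D' = C := by
      ext x
      constructor
      · rintro ⟨hx | hx, hxd⟩
        · exact hx
        · exact absurd hx hxd
      · exact fun hx => ⟨Or.inl hx, hCD' x hx⟩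
    have hD'A' : D' ⊆ A' := Set.subset_union_right
    have hA'J : A' ⊆ J.verts := by
      rintro x (hx | hx)
      · exact hAJ (hCsub hx).1.1
      · rcases hx.1 with h | h
        · exact hAJ (hD0A h)
        · exact h ▸ hAJ hvA
    refine ⟨(A', D'), ⟨⟨hA'J, ⟨⟨v, hvD'⟩, hD'A', ?_, ?_, ?_⟩, ?_⟩, ?_⟩, ?_⟩
    · -- every u ∈ D' has a neighbour in A' \ D'
      intro u hu
      obtain ⟨c, hc, hadj⟩ := hu.2
      exact ⟨c, by rw [hAmD]; exact hc, hadj⟩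
    · -- order condition
      intro u hu c hc
      rw [hAmD] at hc
      rcases hu.1 with h | h
      · exact hD0lt u h c ⟨(hCsub hc).1.1, (hCsub hc).1.2⟩
      · subst h
        exact (hvmin c (hS0P c (hCsub hc).1)).lt_of_ne (fun h => (hCsub hc).2 h.symm)
    · -- boundary condition
      rintro x hx ⟨y, ⟨hyJ, hyA'⟩, hxy⟩
      rcases hx with hx | hx
      · exfalso
        by_cases hyA : y ∈ P0.1
        · by_cases hyD : y ∈ P0.2 ∨ y = v
          · exact hyA' (hD'A' ⟨hyD, x, hx, hxy.symm⟩)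
          · have hy1 : y ∈ S1 := ⟨⟨hyA, fun h => hyD (Or.inl h)⟩, fun h => hyD (Or.inr h)⟩
            exact hyA' (Or.inl (hclose x hx y hxy hy1))
        · exact (hCsub hx).1.2 (hbd0 x (hCsub hx).1.1 ⟨y, ⟨hyJ, hyA⟩, hxy⟩)
      · exact hx
    · -- connectivity
      rw [hAmD]
      have hne : Nonempty ↥(J.induce C).verts := ⟨⟨w, hwC⟩⟩
      have toC : ∀ x y (p : QC.Walk x y) (hx : x ∈ C) (hy : y ∈ C),
          (J.induce C).coe.Reachable ⟨x, hx⟩ ⟨y, hy⟩ := by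
        intro x y p
        induction p with
        | nil => exact fun hx hy => Reachable.refl _
        | @cons a b c h p ih =>
          intro hx hy
          have hb : b ∈ C := Reachable.trans ⟨p⟩ hy
          have hadj : (J.induce C).coe.Adj ⟨a, hx⟩ ⟨b, hb⟩ := ⟨hx, hb, (hQCadj h).2.2⟩
          exact hadj.reachable.trans (ih hb hy)
      rw [(J.induce C).connected_iff]
      refine ⟨⟨?_⟩, ⟨w, hwC⟩⟩
      rintro ⟨x, hx⟩ ⟨y, hy⟩
      have hx' : QC.Reachable x w := hx
      have hy' : QC.Reachable y w := hy
      obtain ⟨pxy⟩ := hx'.trans hy'.symm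
      exact toC x y pxy hx hy
    · -- spine condition
      ext x
      constructor
      · rintro ⟨hxA, hxU⟩
        rcases hxA with hx | hx
        · exfalso
          rcases hxU with h | h
          · exact hS0U x (hCsub hx).1 h
          · exact (hCsub hx).2 h
        · exact hx
      · intro hx
        refine ⟨hD'A' hx, ?_⟩
        rcases hx.1 with h | h
        · exact Or.inl (by rw [← hAU] at h; exact h.2)
        · exact Or.inr h
    · exact ⟨Or.inl hwC, hCD' w hwC⟩
  · -- v not in P0: reuse P0
    refine ⟨P0, ⟨⟨hAJ, ⟨hD0ne, hD0A, hD0adj, hD0lt, hbd0⟩, hconn⟩, ?_⟩, hwS0⟩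
    rw [Set.inter_union_distrib_left, hAU, Set.inter_singleton_eq_empty.mpr hvA,
      Set.union_empty]
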